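/- Let Z, W : Fin n → Fin n → ℝ both satisfy the additive transitivity condition, and suppose they agree on one row: Z q j = W q j for all j, for some q. Then Z = W. -/
import Mathlib

theorem stmt_11 (n : ℕ) (Z W : Fin n → Fin n → ℝ)
    (hZ : ∀ i j k, Z i j = Z i k + Z k j)
    (hW : ∀ i j k, W i j = W i k + W k j)
    (q : Fin n) (hrow : ∀ j, Z q j = W q j) :
    Z = W := by
  funext i j
  have hz0 : Z q q = 0 := by have := hZ q q q; linarith
  have hw0 : W q q = 0 := by have := hW q q q; linarith
  have h1 := hZ i j q
  have h2 := hZ q q i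
  have h3 := hW i j q
  have h4 := hW q q i
  have := hrow j
  have := hrow i
  linarith
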